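/- For all sufficiently large positive integers N, the volume V_N of the unit ball in ℝ^N satisfies log₂ V_N = −(N/2)·log₂(N/(2πe)) − (1/2)·log₂(Nπ) − ε for some ε with 0 < ε < (log₂ e)/(6N). -/

import Mathlib

open scoped BigOperators
open MeasureTheory

noncomputable section

/-- The index set for `ℝ^{s+2t}`: `s` real coordinates and `t` pairs of coordinates. -/
abbrev PackIdx (s t : ℕ) := Fin s ⊕ Fin t × Fin 2

/-- The canonical embedding `τ : K → ℝ^{s+2t}`,
`τ(α) = (ρ₁(α),…,ρ_s(α), √2·Re σ₁(α), √2·Im σ₁(α), …, √2·Re σ_t(α), √2·Im σ_t(α))`. -/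
def tauEmb {K : Type*} [Field K] {s t : ℕ}
    (ρ : Fin s → (K →+* ℝ)) (σ : Fin t → (K →+* ℂ)) (α : K) :
    EuclideanSpace ℝ (PackIdx s t) :=
  (EuclideanSpace.equiv (PackIdx s t) ℝ).symm <|
    Sum.elim (fun i => ρ i α)
      (fun p => if p.2 = (0 : Fin 2) then Real.sqrt 2 * (σ p.1 α).re
                else Real.sqrt 2 * (σ p.1 α).im)

/-- The system of `s + 2t` field embeddings `K → ℂ` determined by the data `ρ, σ`:
the real embeddings `ρᵢ` and the complex embeddings `σⱼ` together with their conjugates. -/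
def embSystem {K : Type*} [Field K] {s t : ℕ}
    (ρ : Fin s → (K →+* ℝ)) (σ : Fin t → (K →+* ℂ)) : PackIdx s t → (K →+* ℂ) :=
  Sum.elim (fun i => Complex.ofRealHom.comp (ρ i))
    (fun p => if p.2 = (0 : Fin 2) then σ p.1 else (starRingEnd ℂ).comp (σ p.1))

/-- `ρ, σ` list exactly the real embeddings and the pairs of complex-conjugate embeddings
of `K`, without repetition: the associated system of `s+2t` embeddings `K → ℂ` is a
bijective enumeration of all field embeddings `K → ℂ`. -/
def IsEmbSystem {K : Type*} [Field K] {s t : ℕ}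
    (ρ : Fin s → (K →+* ℝ)) (σ : Fin t → (K →+* ℂ)) : Prop :=
  Function.Bijective (embSystem ρ σ)

/-- The minimum (infimal) Euclidean distance between two distinct points of `P`. -/
def minDist {E : Type*} [MetricSpace E] (P : Set E) : ℝ :=
  sInf {d : ℝ | ∃ x ∈ P, ∃ y ∈ P, x ≠ y ∧ dist x y = d}

/-- The volume `V_N` of the unit ball in `ℝ^N` (with index set `ι`, `N = |ι|`). -/
def unitBallVol (ι : Type*) [Fintype ι] : ℝ :=
  (volume (Metric.ball (0 : EuclideanSpace ℝ ι) 1)).toReal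

/-- The packing density
`Δ(P) = limsup_{R→∞} |P ∩ B(R)| · r^N · V_N / vol(B(R+r))`, where `r = d_E(P)/2`. -/
def packDensity {ι : Type*} [Fintype ι] (P : Set (EuclideanSpace ℝ ι)) : ℝ :=
  Filter.limsup (fun R : ℝ =>
    (Nat.card (P ∩ Metric.closedBall 0 R : Set (EuclideanSpace ℝ ι)) : ℝ) *
      (minDist P / 2) ^ (Fintype.card ι) * unitBallVol ι /
      (volume (Metric.closedBall (0 : EuclideanSpace ℝ ι) (R + minDist P / 2))).toReal)
    Filter.atTop

/-- `L_I = τ(I)`, the image in `ℝ^{s+2t}` of an ideal `I` of the ring of integers under the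
canonical embedding. -/
def idealImage {K : Type*} [Field K] [NumberField K] {s t : ℕ}
    (ρ : Fin s → (K →+* ℝ)) (σ : Fin t → (K →+* ℂ))
    (I : Ideal (NumberField.RingOfIntegers K)) : Set (EuclideanSpace ℝ (PackIdx s t)) :=
  (fun a : NumberField.RingOfIntegers K =>
    tauEmb ρ σ (algebraMap (NumberField.RingOfIntegers K) K a)) '' (I : Set _)

/-- The coordinatewise extension `τ : K^n → ℝ^{mn}`. -/
def tauEmbN {K : Type*} [Field K] {s t : ℕ} {n : ℕ}
    (ρ : Fin s → (K →+* ℝ)) (σ : Fin t → (K →+* ℂ)) (c : Fin n → K) :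
    EuclideanSpace ℝ (Fin n × PackIdx s t) :=
  (EuclideanSpace.equiv (Fin n × PackIdx s t) ℝ).symm fun p => tauEmb ρ σ (c p.1) p.2

/-- The Cartesian product `L^n ⊆ ℝ^{mn}` of `n` copies of `L ⊆ ℝ^m`. -/
def prodSet {ι : Type*} (n : ℕ) (L : Set (EuclideanSpace ℝ ι)) :
    Set (EuclideanSpace ℝ (Fin n × ι)) :=
  {x | ∀ j : Fin n,
    ((EuclideanSpace.equiv ι ℝ).symm fun i => (EuclideanSpace.equiv (Fin n × ι) ℝ) x (j, i)) ∈ L}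

/-- `S` is a valid alphabet set at level `i`: a set of `q` elements of `p^i` containing `0`
whose residues modulo `p^{i+1}` represent the `q` distinct elements of `p^i/p^{i+1}`. -/
def IsRepSet {K : Type*} [Field K] [NumberField K]
    (p : Ideal (NumberField.RingOfIntegers K)) (i q : ℕ)
    (S : Set (NumberField.RingOfIntegers K)) : Prop :=
  S ⊆ (p ^ i : Ideal (NumberField.RingOfIntegers K)) ∧ (0 : NumberField.RingOfIntegers K) ∈ S ∧
    Nat.card S = q ∧
    (∀ x ∈ S, ∀ y ∈ S, x ≠ y → x - y ∉ (p ^ (i + 1) : Ideal (NumberField.RingOfIntegers K))) ∧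
    (∀ z ∈ (p ^ i : Ideal (NumberField.RingOfIntegers K)), ∃ a ∈ S,
      z - a ∈ (p ^ (i + 1) : Ideal (NumberField.RingOfIntegers K)))

/-- Hamming distance between two words. -/
def hDist {n : ℕ} {A : Type*} (u v : Fin n → A) : ℕ := Nat.card {j : Fin n // u j ≠ v j}

/-- The minimum Hamming distance of a code `C`. -/
def codeMinDist {n : ℕ} {A : Type*} (C : Set (Fin n → A)) : ℕ :=
  sInf {d : ℕ | ∃ u ∈ C, ∃ v ∈ C, u ≠ v ∧ hDist u v = d}

/-- `C` is an `(n, M, d)`-code over the alphabet set `S`. -/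
def IsCode {A : Type*} {n : ℕ} (S : Set A) (M d : ℕ) (C : Set (Fin n → A)) : Prop :=
  (∀ c ∈ C, ∀ j, c j ∈ S) ∧ Nat.card C = M ∧ codeMinDist C = d

/-- The translate `τ(c) + P` of `P` by the embedded codeword `c`. -/
def wordTranslate {K : Type*} [Field K] [NumberField K] {s t n : ℕ}
    (ρ : Fin s → (K →+* ℝ)) (σ : Fin t → (K →+* ℂ))
    (c : Fin n → NumberField.RingOfIntegers K)
    (P : Set (EuclideanSpace ℝ (Fin n × PackIdx s t))) :
    Set (EuclideanSpace ℝ (Fin n × PackIdx s t)) :=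
  {z | ∃ x ∈ P, z = tauEmbN ρ σ (fun j => algebraMap (NumberField.RingOfIntegers K) K (c j)) + x}

/-- The concatenation `τ(C) + P = { τ(c) + p : c ∈ C, p ∈ P }`. -/
def codeTranslate {K : Type*} [Field K] [NumberField K] {s t n : ℕ}
    (ρ : Fin s → (K →+* ℝ)) (σ : Fin t → (K →+* ℂ))
    (C : Set (Fin n → NumberField.RingOfIntegers K))
    (P : Set (EuclideanSpace ℝ (Fin n × PackIdx s t))) :
    Set (EuclideanSpace ℝ (Fin n × PackIdx s t)) :=
  {z | ∃ c ∈ C, ∃ x ∈ P,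
    z = tauEmbN ρ σ (fun j => algebraMap (NumberField.RingOfIntegers K) K (c j)) + x}

/-- The concatenation `τ(𝒞) + P = { Σ_{i<ℓ} τ(cᵢ) + p : cᵢ ∈ Cᵢ, p ∈ P }` of a family of codes. -/
def famTranslate {K : Type*} [Field K] [NumberField K] {s t n ℓ : ℕ}
    (ρ : Fin s → (K →+* ℝ)) (σ : Fin t → (K →+* ℂ))
    (C : Fin ℓ → Set (Fin n → NumberField.RingOfIntegers K))
    (P : Set (EuclideanSpace ℝ (Fin n × PackIdx s t))) :
    Set (EuclideanSpace ℝ (Fin n × PackIdx s t)) :=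
  {z | ∃ c : Fin ℓ → (Fin n → NumberField.RingOfIntegers K), (∀ i, c i ∈ C i) ∧ ∃ x ∈ P,
    z = (∑ i : Fin ℓ,
      tauEmbN ρ σ (fun j => algebraMap (NumberField.RingOfIntegers K) K (c i j))) + x}


section StirlingAux

open Real Filter Stirling Topology

noncomputable def sg (x : ℝ) : ℝ :=
  Real.log (Real.Gamma (x + 1)) - x * Real.log x + x - (1/2) * Real.log (2 * Real.pi * x)

lemma sg_diff {x : ℝ} (hx : 0 < x) :
    sg x - sg (x + 1) = (x + 1/2) * Real.log (1 + 1/x) - 1 := by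
  have hx1 : (0:ℝ) < x + 1 := by linarith
  have hΓ : Real.Gamma (x + 1 + 1) = (x + 1) * Real.Gamma (x + 1) :=
    Real.Gamma_add_one (by positivity)
  have hΓpos : 0 < Real.Gamma (x + 1) := Real.Gamma_pos_of_pos (by positivity)
  have h1 : Real.log (1 + 1/x) = Real.log (x + 1) - Real.log x := by
    rw [show (1 : ℝ) + 1/x = (x+1)/x by field_simp, Real.log_div hx1.ne' hx.ne']
  have h2 : Real.log (2 * Real.pi * x) = Real.log (2 * Real.pi) + Real.log x :=
    Real.log_mul (by positivity) hx.ne'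
  have h3 : Real.log (2 * Real.pi * (x + 1)) = Real.log (2 * Real.pi) + Real.log (x + 1) :=
    Real.log_mul (by positivity) hx1.ne'
  have h4 : Real.log ((x+1) * Real.Gamma (x+1)) = Real.log (x+1) + Real.log (Real.Gamma (x+1)) :=
    Real.log_mul hx1.ne' hΓpos.ne'
  simp only [sg, hΓ, h4, h2, h3, h1]
  ring

lemma key_ineq {x : ℝ} (hx : 0 < x) :
    1 < (x + 1/2) * Real.log (1 + 1/x) ∧
    (x + 1/2) * Real.log (1 + 1/x) < 1 + (1/(12*x) - 1/(12*(x+1))) := by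
  have h0 : (0:ℝ) < 2*x + 1 := by linarith
  set t : ℝ := 1/(2*x+1) with ht
  have htpos : 0 < t := by positivity
  have ht1 : t < 1 := by rw [ht, div_lt_one h0]; linarith
  have ht2 : t^2 < 1 := by nlinarith
  have hone : (x + 1/2) * 2 * t = 1 := by rw [ht]; field_simp
  have hsum0 := (Real.hasSum_log_one_add_inv hx).mul_left (x + 1/2)
  have hsum : HasSum (fun k : ℕ => (1:ℝ)/(2*(k:ℝ)+1) * (t^2)^k)
      ((x + 1/2) * Real.log (1 + 1/x)) := by
    rw [show (1:ℝ) + 1/x = 1 + x⁻¹ by rw [one_div]]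
    refine hsum0.congr_fun fun k => ?_
    have hp : t ^ (2*k+1) = t * (t^2)^k := by rw [pow_add, pow_mul, pow_one]; ring
    calc (1:ℝ)/(2*(k:ℝ)+1) * (t^2)^k
        = ((x + 1/2) * 2 * t) * ((1:ℝ)/(2*(k:ℝ)+1) * (t^2)^k) := by rw [hone]; ring
      _ = (x + 1/2) * (2 * (1/(2*(k:ℝ)+1)) * t^(2*k+1)) := by rw [hp]; ring
  set S := (x + 1/2) * Real.log (1 + 1/x) with hS
  have hshift : HasSum (fun k : ℕ => (1:ℝ)/(2*((k:ℝ)+1)+1) * (t^2)^(k+1)) (S - 1) := by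
    have h := (hasSum_nat_add_iff' (f := fun k : ℕ => (1:ℝ)/(2*(k:ℝ)+1) * (t^2)^k) 1).2 hsum
    simp only [Finset.range_one, Finset.sum_singleton, Nat.cast_zero] at h
    norm_num at h
    refine h.congr_fun fun k => ?_
    push_cast
    ring_nf
  constructor
  · have hle := le_hasSum hshift 0 (fun j _ => by positivity)
    have hpos : (0:ℝ) < (1:ℝ)/(2*((0:ℕ):ℝ)+1+1+1) * (t^2)^((0:ℕ)+1) := by positivity
    have : (1:ℝ)/(2*(((0:ℕ):ℝ)+1)+1) * (t^2)^((0:ℕ)+1) > 0 := by positivity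
    linarith [hle, this]
  · have hgeo : HasSum (fun k : ℕ => (1/3:ℝ) * (t^2)^(k+1)) (1/3 * (t^2 / (1 - t^2))) := by
      have h := (hasSum_geometric_of_lt_one (r := t^2) (by positivity) ht2).mul_left ((1/3:ℝ) * t^2)
      rw [show (1/3:ℝ)*t^2*(1-t^2)⁻¹ = 1/3*(t^2/(1-t^2)) by ring] at h
      refine h.congr_fun fun k => ?_
      rw [pow_succ]
      ring
    have hlt : S - 1 < 1/3 * (t^2/(1-t^2)) := by
      refine hasSum_lt (i := 1) (fun k => ?_) ?_ hshift hgeo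
      · have hk : ((1:ℝ)/(2*((k:ℝ)+1)+1)) ≤ 1/3 := by
          apply one_div_le_one_div_of_le
          · norm_num
          · have := Nat.cast_nonneg (α := ℝ) k; linarith
        exact mul_le_mul_of_nonneg_right hk (by positivity)
      · have hpos : (0:ℝ) < (t^2)^((1:ℕ)+1) := by positivity
        have : ((1:ℝ)/(2*(((1:ℕ):ℝ)+1)+1)) = 1/5 := by norm_num
        rw [this]
        exact mul_lt_mul_of_pos_right (by norm_num) hpos
    have h2 : (1:ℝ) - t^2 = (4*x^2+4*x)/((2*x+1)^2) := by rw [ht]; field_simp; ring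
    have h3 : t^2 = 1/((2*x+1)^2) := by rw [ht, one_div, one_div, inv_pow]
    have hB : ((4:ℝ)*x^2+4*x) ≠ 0 := by positivity
    have hdiv : t^2/(1-t^2) = 1/(4*x^2+4*x) := by
      rw [h3]
      rw [show (1:ℝ) - 1/((2*x+1)^2) = (4*x^2+4*x)/((2*x+1)^2) by field_simp; ring]
      rw [div_div_div_eq, one_mul]
      rw [eq_div_iff hB]
      field_simp
    have h12 : (1:ℝ)/(12*x) - 1/(12*(x+1)) = 1/3 * (1/(4*x^2+4*x)) := by
      field_simp
      ring
    rw [hS] at hlt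
    rw [h12]
    rw [hdiv] at hlt
    linarith

lemma sg_tele {x : ℝ} (hx : 0 < x) (K : ℕ) :
    0 ≤ sg x - sg (x + K) ∧ sg x - sg (x + K) ≤ 1/(12*x) - 1/(12*(x+K)) := by
  induction K with
  | zero => norm_num
  | succ K ih =>
    have hxK : 0 < x + K := by positivity
    have hd := sg_diff hxK
    have hk := key_ineq hxK
    have hcast : x + ((K:ℝ) + 1) = (x + K) + 1 := by ring
    have h1 : sg (x + ((K:ℕ)+1:ℕ)) = sg ((x + K) + 1) := by push_cast; rw [hcast]
    constructor
    · rw [h1]; linarith [ih.1, hk.1, hd]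
    · rw [h1]
      have : (1:ℝ)/(12*(x+((K:ℕ)+1:ℕ))) = 1/(12*((x+K)+1)) := by push_cast; rw [hcast]
      rw [this]
      linarith [ih.2, hk.2, hd]

lemma sg_nat (n : ℕ) (hn : 1 ≤ n) :
    sg n = Real.log (stirlingSeq n) - (1/2) * Real.log Real.pi := by
  have hn0 : (0:ℝ) < n := by exact_mod_cast hn
  have hΓ : Real.Gamma ((n:ℝ) + 1) = (Nat.factorial n : ℝ) := Real.Gamma_nat_eq_factorial n
  have hf := log_stirlingSeq_formula n
  have h1 : Real.log ((n:ℝ)/Real.exp 1) = Real.log n - 1 := by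
    rw [Real.log_div hn0.ne' (Real.exp_ne_zero 1), Real.log_exp]
  have h2 : Real.log (2 * Real.pi * (n:ℝ)) = Real.log 2 + Real.log Real.pi + Real.log n := by
    rw [Real.log_mul (by positivity) hn0.ne', Real.log_mul (by norm_num) Real.pi_ne_zero]
  have h3 : Real.log (2 * (n:ℝ)) = Real.log 2 + Real.log n :=
    Real.log_mul (by norm_num) hn0.ne'
  rw [sg, hΓ]
  rw [h1, h3] at hf
  rw [h2]
  linarith [hf]

lemma tendsto_sg_nat : Tendsto (fun n : ℕ => sg n) atTop (𝓝 0) := by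
  have hπ : (0:ℝ) < Real.sqrt Real.pi := Real.sqrt_pos.2 Real.pi_pos
  have h1 : Tendsto (fun n : ℕ => Real.log (stirlingSeq n)) atTop (𝓝 (Real.log (Real.sqrt Real.pi))) :=
    ((Real.continuousAt_log hπ.ne').tendsto).comp tendsto_stirlingSeq_sqrt_pi
  have h2 : Real.log (Real.sqrt Real.pi) = (1/2) * Real.log Real.pi := by
    rw [Real.log_sqrt Real.pi_pos.le]; ring
  have h3 : Tendsto (fun n : ℕ => Real.log (stirlingSeq n) - (1/2) * Real.log Real.pi)
      atTop (𝓝 0) := by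
    have := h1.sub (tendsto_const_nhds (x := (1/2) * Real.log Real.pi) (f := atTop))
    rw [h2] at this
    simpa using this
  refine h3.congr' ?_
  filter_upwards [eventually_ge_atTop 1] with n hn
  exact (sg_nat n hn).symm

lemma Gamma_nat_add_half (n : ℕ) :
    Real.Gamma ((n:ℝ) + 1/2) =
      (Nat.factorial (2*n) : ℝ) * Real.sqrt Real.pi / (4^n * (Nat.factorial n : ℝ)) := by
  induction n with
  | zero =>
    norm_num
    exact Real.Gamma_one_half_eq
  | succ n ih =>
    have h1 : ((n:ℝ)+1) + 1/2 = ((n:ℝ) + 1/2) + 1 := by ring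
    have h2 : Real.Gamma (((n:ℝ) + 1/2) + 1) = ((n:ℝ) + 1/2) * Real.Gamma ((n:ℝ) + 1/2) :=
      Real.Gamma_add_one (by positivity)
    have hfac1 : (Nat.factorial (2*(n+1)) : ℝ) =
        (2*(n:ℝ)+2) * (2*(n:ℝ)+1) * (Nat.factorial (2*n) : ℝ) := by
      have : 2*(n+1) = (2*n+1) + 1 := by ring
      rw [this, Nat.factorial_succ, Nat.factorial_succ]
      push_cast
      ring
    have hfac2 : (Nat.factorial (n+1) : ℝ) = ((n:ℝ)+1) * (Nat.factorial n : ℝ) := by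
      rw [Nat.factorial_succ]; push_cast; ring
    push_cast
    rw [h1, h2, ih, hfac1, hfac2]
    have hne1 : ((4:ℝ)^n) ≠ 0 := by positivity
    have hne2 : ((Nat.factorial n : ℝ)) ≠ 0 := by positivity
    have hne3 : ((n:ℝ)+1) ≠ 0 := by positivity
    field_simp
    ring

lemma sg_half (n : ℕ) :
    sg ((n:ℝ) + 1/2) = Real.log (stirlingSeq (2*(n+1))) - Real.log (stirlingSeq (n+1))
      - ((n:ℝ)+1) * Real.log (1 - 1/(2*((n:ℝ)+1))) - 1/2 := by
  set N : ℝ := (n:ℝ) + 1 with hN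
  have hN0 : (0:ℝ) < N := by positivity
  have hNsub : (0:ℝ) < N - 1/2 := by rw [hN]; have := Nat.cast_nonneg (α := ℝ) n; linarith
  have hπ : (0:ℝ) < Real.pi := Real.pi_pos
  -- Gamma value
  have hΓ : Real.Gamma (((n:ℝ) + 1/2) + 1) =
      (Nat.factorial (2*(n+1)) : ℝ) * Real.sqrt Real.pi / (4^(n+1) * (Nat.factorial (n+1) : ℝ)) := by
    have h1 : ((n:ℝ) + 1/2) + 1 = ((n+1 : ℕ):ℝ) + 1/2 := by push_cast; ring
    rw [h1, _root_.Gamma_nat_add_half (n+1)]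
  have hfpos1 : (0:ℝ) < (Nat.factorial (n+1) : ℝ) := by exact_mod_cast Nat.factorial_pos (n+1)
  have hfpos2 : (0:ℝ) < (Nat.factorial (2*(n+1)) : ℝ) := by exact_mod_cast Nat.factorial_pos (2*(n+1))
  have h4pos : (0:ℝ) < 4^(n+1) := by positivity
  -- expand logΓ
  have hlogΓ : Real.log (Real.Gamma (((n:ℝ) + 1/2) + 1)) =
      Real.log (Nat.factorial (2*(n+1)) : ℝ) + (1/2) * Real.log Real.pi
        - 2*N*Real.log 2 - Real.log (Nat.factorial (n+1) : ℝ) := by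
    rw [hΓ, Real.log_div (by positivity) (by positivity), Real.log_mul hfpos2.ne' (by positivity),
      Real.log_mul h4pos.ne' hfpos1.ne', Real.log_sqrt hπ.le,
      show ((4:ℝ)^(n+1)) = 2^(2*(n+1)) by rw [pow_mul]; norm_num,
      Real.log_pow]
    push_cast [hN]
    ring
  -- stirling formulas
  have hs1 := log_stirlingSeq_formula (n+1)
  have hs2 := log_stirlingSeq_formula (2*(n+1))
  have hc1 : ((n+1 : ℕ):ℝ) = N := by push_cast [hN]; ring
  have hc2 : ((2*(n+1) : ℕ):ℝ) = 2*N := by push_cast [hN]; ring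
  rw [hc1] at hs1
  rw [hc2] at hs2
  have hloge1 : Real.log (N / Real.exp 1) = Real.log N - 1 := by
    rw [Real.log_div hN0.ne' (Real.exp_ne_zero 1), Real.log_exp]
  have hloge2 : Real.log (2*N / Real.exp 1) = Real.log 2 + Real.log N - 1 := by
    rw [Real.log_div (by positivity) (Real.exp_ne_zero 1), Real.log_exp,
      Real.log_mul (by norm_num) hN0.ne']
  have hlog2N : Real.log (2*N) = Real.log 2 + Real.log N := Real.log_mul (by norm_num) hN0.ne'
  have hlog4N : Real.log (2*(2*N)) = 2*Real.log 2 + Real.log N := by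
    rw [show (2*(2*N):ℝ) = 2*2*N by ring, Real.log_mul (by norm_num) hN0.ne',
      Real.log_mul (by norm_num) (by norm_num)]
    ring
  rw [hloge1, hlog2N] at hs1
  rw [hloge2, hlog4N] at hs2
  -- other logs
  have hlogM : Real.log (1 - 1/(2*N)) = Real.log (N - 1/2) - Real.log N := by
    rw [show (1:ℝ) - 1/(2*N) = (N - 1/2)/N by field_simp,
      Real.log_div hNsub.ne' hN0.ne']
  have hlog2π : Real.log (2 * Real.pi * ((n:ℝ)+1/2)) =
      Real.log 2 + Real.log Real.pi + Real.log (N - 1/2) := by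
    rw [show ((n:ℝ)+1/2) = N - 1/2 by rw [hN]; ring,
      Real.log_mul (by positivity) hNsub.ne', Real.log_mul (by norm_num) hπ.ne']
  have hx : ((n:ℝ) + 1/2) = N - 1/2 := by rw [hN]; ring
  rw [sg, hlogΓ, hlog2π, hlogM, hx]
  linarith [hs1, hs2]

lemma tendsto_sg_half : Tendsto (fun n : ℕ => sg ((n:ℝ) + 1/2)) atTop (𝓝 0) := by
  have hπ : (0:ℝ) < Real.sqrt Real.pi := Real.sqrt_pos.2 Real.pi_pos
  have hlog : Tendsto (fun n : ℕ => Real.log (stirlingSeq n)) atTop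
      (𝓝 (Real.log (Real.sqrt Real.pi))) :=
    ((Real.continuousAt_log hπ.ne').tendsto).comp tendsto_stirlingSeq_sqrt_pi
  have hA : Tendsto (fun n : ℕ => Real.log (stirlingSeq (2*(n+1)))) atTop
      (𝓝 (Real.log (Real.sqrt Real.pi))) :=
    hlog.comp ((strictMono_nat_of_lt_succ (f := fun n : ℕ => 2*(n+1))
      (fun n => by simp)).tendsto_atTop)
  have hB : Tendsto (fun n : ℕ => Real.log (stirlingSeq (n+1))) atTop
      (𝓝 (Real.log (Real.sqrt Real.pi))) :=
    hlog.comp (tendsto_add_atTop_nat 1)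
  have hC : Tendsto (fun n : ℕ => ((n:ℝ)+1) * Real.log (1 - 1/(2*((n:ℝ)+1)))) atTop
      (𝓝 (-(1/2))) := by
    have hexp : Tendsto (fun n : ℕ => (1 + (-(1/2))/((n:ℝ)+1))^(n+1)) atTop
        (𝓝 (Real.exp (-(1/2)))) := by
      have h := (Real.tendsto_one_add_div_pow_exp (-(1/2))).comp (tendsto_add_atTop_nat 1)
      refine h.congr fun n => ?_
      simp only [Function.comp_apply]
      push_cast
      norm_num
    have hlogexp : Tendsto (fun n : ℕ =>
        Real.log ((1 + (-(1/2))/((n:ℝ)+1))^(n+1))) atTop (𝓝 (-(1/2))) := by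
      have := ((Real.continuousAt_log (Real.exp_pos _).ne').tendsto).comp hexp
      rwa [Real.log_exp] at this
    refine hlogexp.congr fun n => ?_
    have hn1 : (0:ℝ) < (n:ℝ) + 1 := by positivity
    rw [Real.log_pow]
    have harg : (1:ℝ) + (-(1/2))/((n:ℝ)+1) = 1 - 1/(2*((n:ℝ)+1)) := by
      field_simp
      ring
    rw [harg]
    push_cast
    ring
  have hsum := ((hA.sub hB).sub hC).sub (tendsto_const_nhds (x := (1/2:ℝ)) (f := atTop (α := ℕ)))
  have h2 : Tendsto (fun n : ℕ => Real.log (stirlingSeq (2*(n+1))) - Real.log (stirlingSeq (n+1))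
      - ((n:ℝ)+1) * Real.log (1 - 1/(2*((n:ℝ)+1))) - 1/2) atTop (𝓝 0) := by
    convert hsum using 2
    ring
  refine h2.congr fun n => (sg_half n).symm

lemma sg_nonneg_le (N : ℕ) (hN : 1 ≤ N) :
    0 ≤ sg ((N:ℝ)/2) ∧ sg ((N:ℝ)/2) ≤ 1/(6*(N:ℝ)) := by
  have hN0 : (0:ℝ) < N := by exact_mod_cast hN
  have hx : (0:ℝ) < (N:ℝ)/2 := by positivity
  have hlim : Tendsto (fun K : ℕ => sg ((N:ℝ)/2 + K)) atTop (𝓝 0) := by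
    rcases Nat.even_or_odd N with ⟨m, hm⟩ | ⟨m, hm⟩
    · have h := tendsto_sg_nat.comp (tendsto_add_atTop_nat m)
      refine h.congr fun K => ?_
      have : ((K + m : ℕ):ℝ) = (N:ℝ)/2 + K := by push_cast [hm]; ring
      simp only [Function.comp_apply, this]
    · have h := tendsto_sg_half.comp (tendsto_add_atTop_nat m)
      refine h.congr fun K => ?_
      have : ((K + m : ℕ):ℝ) + 1/2 = (N:ℝ)/2 + K := by push_cast [hm]; ring
      simp only [Function.comp_apply, this]
  constructor
  · refine le_of_tendsto hlim ?_
    filter_upwards with K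
    linarith [(sg_tele hx K).1]
  · have h1 : sg ((N:ℝ)/2) - 1/(12*((N:ℝ)/2)) ≤ 0 := by
      refine ge_of_tendsto hlim ?_
      filter_upwards with K
      have h2 := (sg_tele hx K).2
      have h3 : (0:ℝ) ≤ 1/(12*((N:ℝ)/2 + K)) := by positivity
      linarith
    have : (1:ℝ)/(12*((N:ℝ)/2)) = 1/(6*(N:ℝ)) := by rw [show (12:ℝ)*((N:ℝ)/2) = 6*N by ring]
    linarith [this ▸ h1]

lemma sg_bounds (N : ℕ) (hN : 1 ≤ N) :
    0 < sg ((N:ℝ)/2) ∧ sg ((N:ℝ)/2) < 1/(6*(N:ℝ)) := by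
  have hN0 : (0:ℝ) < N := by exact_mod_cast hN
  have hx : (0:ℝ) < (N:ℝ)/2 := by positivity
  have hd := sg_diff hx
  have hk := key_ineq hx
  have hcast : ((N + 2 : ℕ):ℝ)/2 = (N:ℝ)/2 + 1 := by push_cast; ring
  have hnn := sg_nonneg_le (N+2) (by omega)
  rw [hcast] at hnn
  constructor
  · linarith [hnn.1, hk.1, hd]
  · have h6 : (1:ℝ)/(6*((N:ℝ)+2)) = 1/(12*((N:ℝ)/2+1)) := by
      rw [show (12:ℝ)*((N:ℝ)/2+1) = 6*((N:ℝ)+2) by ring]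
    have h12 : (1:ℝ)/(12*((N:ℝ)/2)) = 1/(6*(N:ℝ)) := by
      rw [show (12:ℝ)*((N:ℝ)/2) = 6*N by ring]
    have hnn2 := hnn.2
    push_cast at hnn2
    linarith [hk.2, hd, hnn2]

end StirlingAux

/-- For all sufficiently large `N`, the volume `V_N` of the unit ball in
`ℝ^N` satisfies `log₂ V_N = −(N/2)·log₂(N/(2πe)) − (1/2)·log₂(Nπ) − ε` with
`0 < ε < (log₂ e)/(6N)`. -/
theorem statement15 :
    ∀ᶠ N : ℕ in Filter.atTop, ∃ ε : ℝ,
      0 < ε ∧ ε < Real.logb 2 (Real.exp 1) / (6 * (N : ℝ)) ∧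
      Real.logb 2 (unitBallVol (Fin N)) =
        -((N : ℝ) / 2) * Real.logb 2 ((N : ℝ) / (2 * Real.pi * Real.exp 1)) -
          (1 / 2) * Real.logb 2 ((N : ℝ) * Real.pi) - ε := by
  rw [Filter.eventually_atTop]
  refine ⟨1, fun N hN => ?_⟩
  have hN0 : (0:ℝ) < N := by exact_mod_cast hN
  have hπ : (0:ℝ) < Real.pi := Real.pi_pos
  have hsqπ : (0:ℝ) < Real.sqrt Real.pi := Real.sqrt_pos.2 hπ
  have hΓpos : (0:ℝ) < Real.Gamma ((N:ℝ)/2 + 1) := Real.Gamma_pos_of_pos (by positivity)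
  have hlog2 : (0:ℝ) < Real.log 2 := Real.log_pos (by norm_num)
  haveI : Nonempty (Fin N) := ⟨⟨0, by omega⟩⟩
  -- volume formula
  have hvol : unitBallVol (Fin N) = Real.sqrt Real.pi ^ N / Real.Gamma ((N:ℝ)/2 + 1) := by
    rw [unitBallVol, EuclideanSpace.volume_ball]
    rw [Fintype.card_fin, ENNReal.ofReal_one, one_pow, one_mul,
      ENNReal.toReal_ofReal (by positivity)]
  have hvolpos : (0:ℝ) < unitBallVol (Fin N) := by rw [hvol]; positivity
  -- log of the volume
  have hsg : sg ((N:ℝ)/2) = Real.log (Real.Gamma ((N:ℝ)/2 + 1))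
      - ((N:ℝ)/2) * Real.log ((N:ℝ)/2) + (N:ℝ)/2
      - (1/2) * Real.log (Real.pi * (N:ℝ)) := by
    rw [sg, show 2 * Real.pi * ((N:ℝ)/2) = Real.pi * (N:ℝ) by ring]
  have hlogdiv2 : Real.log ((N:ℝ)/2) = Real.log N - Real.log 2 :=
    Real.log_div hN0.ne' (by norm_num)
  have hlogNπ : Real.log ((N:ℝ) * Real.pi) = Real.log N + Real.log Real.pi :=
    Real.log_mul hN0.ne' hπ.ne'
  have hlogπN : Real.log (Real.pi * (N:ℝ)) = Real.log Real.pi + Real.log N :=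
    Real.log_mul hπ.ne' hN0.ne'
  have hlogmain : Real.log ((N:ℝ) / (2 * Real.pi * Real.exp 1)) =
      Real.log N - Real.log 2 - Real.log Real.pi - 1 := by
    rw [Real.log_div hN0.ne' (by positivity), Real.log_mul (by positivity) (Real.exp_ne_zero 1),
      Real.log_mul (by norm_num) hπ.ne', Real.log_exp]
    ring
  have hlogV : Real.log (unitBallVol (Fin N)) =
      -((N:ℝ)/2) * Real.log ((N:ℝ) / (2 * Real.pi * Real.exp 1))
        - (1/2) * Real.log ((N:ℝ) * Real.pi) - sg ((N:ℝ)/2) := by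
    rw [hvol, Real.log_div (by positivity) hΓpos.ne', Real.log_pow,
      Real.log_sqrt hπ.le, hlogmain, hlogNπ]
    rw [hsg, hlogdiv2, hlogπN]
    ring
  refine ⟨sg ((N:ℝ)/2) / Real.log 2, ?_, ?_, ?_⟩
  · exact div_pos (sg_bounds N hN).1 hlog2
  · have h1 : Real.logb 2 (Real.exp 1) / (6*(N:ℝ)) = (1/(6*(N:ℝ))) / Real.log 2 := by
      rw [Real.logb, Real.log_exp]
      ring
    rw [h1]
    gcongr
    exact (sg_bounds N hN).2
  · simp only [Real.logb]
    rw [hlogV]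
    field_simp

end
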